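/- Eckart–Young–Mirsky lower bound: let A ∈ ℝ^{m×n} with singular values ς_1 ≥ ς_2 ≥ ... ≥ ς_{min(m,n)}, and let B ∈ ℝ^{m×n} with rank(B) ≤ r < rank(A). Then ‖B − A‖_F ≥ sqrt(Σ_{i=r+1}^{min(m,n)} ς_i²) > 0. -/

import Mathlib

open Finset Module RealInnerProductSpace
set_option maxHeartbeats 1000000

lemma card_filter_lt (K r : ℕ) (h : r ≤ K) :
    (Finset.univ.filter (fun i : Fin K => i.val < r)).card = r := by
  have : Finset.univ.filter (fun i : Fin K => i.val < r)
      = Finset.map (Fin.castLEEmb h) Finset.univ := by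
    ext i
    simp only [Finset.mem_filter, Finset.mem_univ, true_and, Finset.mem_map,
      Fin.castLEEmb_apply]
    constructor
    · intro hi; exact ⟨⟨i.val, hi⟩, rfl⟩
    · rintro ⟨a, rfl⟩; exact a.isLt
  rw [this, Finset.card_map, Finset.card_univ, Fintype.card_fin]

lemma weights {K r : ℕ} (hrK : r < K) (ς q : Fin K → ℝ) (hς0 : ∀ k, 0 ≤ ς k)
    (hanti : Antitone ς) (hq0 : ∀ k, 0 ≤ q k) (hq1 : ∀ k, q k ≤ 1)
    (hqs : ∑ k, q k ≤ (r : ℝ)) :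
    ∑ i ∈ Finset.univ.filter (fun i : Fin K => r ≤ i.val), ς i ^ 2
      ≤ ∑ k, ς k ^ 2 * (1 - q k) := by
  classical
  set L := Finset.univ.filter (fun i : Fin K => i.val < r) with hL
  set G := Finset.univ.filter (fun i : Fin K => r ≤ i.val) with hG
  have hdisj : Disjoint L G := by
    simp only [hL, hG, Finset.disjoint_filter, Finset.mem_univ, true_and]
    intro i hi; omega
  have hunion : L ∪ G = Finset.univ := by
    ext i; simp [hL, hG]; omega
  have hcardL : L.card = r := card_filter_lt K r hrK.le
  set ρ : Fin K := ⟨r, hrK⟩ with hρ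
  -- key: ∑_G ς² q ≤ ∑_L ς² (1 - q)
  have hGq : ∑ k ∈ G, ς k ^ 2 * q k ≤ ∑ k ∈ L, ς k ^ 2 * (1 - q k) := by
    have h1 : ∑ k ∈ G, ς k ^ 2 * q k ≤ ς ρ ^ 2 * ∑ k ∈ G, q k := by
      rw [Finset.mul_sum]
      apply Finset.sum_le_sum
      intro k hk
      have hk' : ρ ≤ k := by
        simp [hG] at hk; exact hk
      have h5 : ς k ^ 2 ≤ ς ρ ^ 2 := pow_le_pow_left₀ (hς0 k) (hanti hk') 2
      exact mul_le_mul_of_nonneg_right h5 (hq0 k)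
    have h2 : ∑ k ∈ G, q k ≤ ∑ k ∈ L, (1 - q k) := by
      have : ∑ k ∈ L, q k + ∑ k ∈ G, q k ≤ (r : ℝ) := by
        rw [← Finset.sum_union hdisj, hunion]; exact hqs
      have hLsum : ∑ k ∈ L, (1 - q k) = (r : ℝ) - ∑ k ∈ L, q k := by
        rw [Finset.sum_sub_distrib, Finset.sum_const, hcardL]; simp
      linarith
    have h3 : ς ρ ^ 2 * ∑ k ∈ G, q k ≤ ς ρ ^ 2 * ∑ k ∈ L, (1 - q k) := by
      apply mul_le_mul_of_nonneg_left h2 (sq_nonneg _)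
    have h4 : ς ρ ^ 2 * ∑ k ∈ L, (1 - q k) ≤ ∑ k ∈ L, ς k ^ 2 * (1 - q k) := by
      rw [Finset.mul_sum]
      apply Finset.sum_le_sum
      intro k hk
      have hk' : k ≤ ρ := by
        simp [hL] at hk
        exact Fin.mk_le_of_le_val (by omega : k.val ≤ r) |>.trans_eq rfl
      have h5 : ς ρ ^ 2 ≤ ς k ^ 2 := pow_le_pow_left₀ (hς0 ρ) (hanti hk') 2
      have : (0:ℝ) ≤ 1 - q k := by linarith [hq1 k]
      exact mul_le_mul_of_nonneg_right h5 this
    linarith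
  have hsplit : ∑ k, ς k ^ 2 * (1 - q k)
      = ∑ k ∈ L, ς k ^ 2 * (1 - q k) + ∑ k ∈ G, ς k ^ 2 * (1 - q k) := by
    rw [← Finset.sum_union hdisj, hunion]
  have : ∑ k ∈ G, ς k ^ 2 = ∑ k ∈ G, ς k ^ 2 * (1 - q k) + ∑ k ∈ G, ς k ^ 2 * q k := by
    rw [← Finset.sum_add_distrib]; apply Finset.sum_congr rfl; intro k _; ring
  linarith

open Finset Module RealInnerProductSpace
set_option maxHeartbeats 1000000

-- Pythagoras: for x in E and S with orthogonal projection
lemma proj_pythagoras {E : Type*} [NormedAddCommGroup E] [InnerProductSpace ℝ E]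
    (S : Submodule ℝ E) [S.HasOrthogonalProjection] (x : E) :
    ‖x‖ ^ 2 = ‖(S.orthogonalProjectionOnto x : E)‖ ^ 2 + ‖x - S.orthogonalProjectionOnto x‖ ^ 2 := by
  have hmem : (x - S.orthogonalProjectionOnto x) ∈ Sᗮ := S.sub_starProjection_mem_orthogonal x
  have h0 : ⟪(S.orthogonalProjectionOnto x : E), x - S.orthogonalProjectionOnto x⟫ = 0 :=
    (Submodule.mem_orthogonal S _).mp hmem _ (Submodule.coe_mem _)
  have := norm_add_sq_real (S.orthogonalProjectionOnto x : E) (x - S.orthogonalProjectionOnto x)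
  simp only [h0, mul_zero, add_zero] at this
  simpa using this

lemma key_lemma {E : Type*} [NormedAddCommGroup E] [InnerProductSpace ℝ E]
    [FiniteDimensional ℝ E] {K r : ℕ} (hrK : r < K)
    (S : Submodule ℝ E) (hS : finrank ℝ S ≤ r)
    (u : Fin K → E) (hu : Orthonormal ℝ u) (ς : Fin K → ℝ) (hς0 : ∀ k, 0 ≤ ς k)
    (hanti : Antitone ς) (w : Fin K → E) (hw : ∀ k, w k ∈ S) :
    ∑ i ∈ Finset.univ.filter (fun i : Fin K => r ≤ i.val), ς i ^ 2
      ≤ ∑ k, ‖w k - ς k • u k‖ ^ 2 := by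
  classical
  set P := S.orthogonalProjectionOnto with hP
  set q : Fin K → ℝ := fun k => ‖(P (u k) : E)‖ ^ 2 with hq
  have hnorm1 : ∀ k, ‖u k‖ = 1 := fun k => hu.1 k
  have hpyth : ∀ k, 1 = q k + ‖u k - P (u k)‖ ^ 2 := by
    intro k
    have := proj_pythagoras S (u k)
    rw [hnorm1 k, one_pow] at this; exact this
  have hq0 : ∀ k, 0 ≤ q k := fun k => sq_nonneg _
  have hq1 : ∀ k, q k ≤ 1 := by
    intro k
    have := hpyth k
    nlinarith [sq_nonneg (‖u k - P (u k)‖)]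
  -- step: sum q ≤ r
  have hqs : ∑ k, q k ≤ (r : ℝ) := by
    set d := finrank ℝ S with hd
    set b := stdOrthonormalBasis ℝ S with hb
    have hqk : ∀ k, q k = ∑ j : Fin d, ⟪u k, (b j : E)⟫ ^ 2 := by
      intro k
      have hpars := b.sum_inner_mul_inner (P (u k)) (P (u k))
      have : ∀ j, ⟪(b j : S), P (u k)⟫ = ⟪(b j : E), u k⟫ := by
        intro j
        rw [Submodule.coe_inner]
        have hmem : (u k - P (u k)) ∈ Sᗮ := S.sub_starProjection_mem_orthogonal (u k)
        have h0 : ⟪(b j : E), u k - P (u k)⟫ = 0 :=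
          (Submodule.mem_orthogonal S _).mp hmem _ (Submodule.coe_mem _)
        have := inner_sub_right (𝕜 := ℝ) (b j : E) (u k) (P (u k))
        rw [h0] at this
        linarith [this]
      have hcn : q k = ‖P (u k)‖ ^ 2 := by
        show ‖(P (u k) : E)‖ ^ 2 = ‖P (u k)‖ ^ 2
        rw [Submodule.norm_coe]
      have hps : ‖P (u k)‖ ^ 2 = ∑ j, ⟪(b j : S), P (u k)⟫ ^ 2 := by
        have h1 := b.sum_inner_mul_inner (P (u k)) (P (u k))
        rw [real_inner_self_eq_norm_sq] at h1
        rw [← h1]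
        apply Finset.sum_congr rfl
        intro j _
        rw [real_inner_comm (P (u k)) (b j)]
        ring
      rw [hcn, hps]
      apply Finset.sum_congr rfl
      intro j _
      rw [this j, real_inner_comm]
    have hsw : ∑ k, q k = ∑ j : Fin d, ∑ k, ⟪u k, (b j : E)⟫ ^ 2 := by
      rw [Finset.sum_comm]
      exact Finset.sum_congr rfl fun k _ => hqk k
    have hbes : ∀ j : Fin d, ∑ k, ⟪u k, (b j : E)⟫ ^ 2 ≤ 1 := by
      intro j
      have h1 := hu.sum_inner_products_le (x := (b j : E)) (s := Finset.univ)
      have h2 : ‖(b j : E)‖ = 1 := by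
        rw [Submodule.norm_coe]; exact b.orthonormal.1 j
      rw [h2] at h1
      simp only [one_pow] at h1
      calc ∑ k, ⟪u k, (b j : E)⟫ ^ 2 = ∑ k, ‖⟪u k, (b j : E)⟫‖ ^ 2 := by
            apply Finset.sum_congr rfl; intro k _
            rw [Real.norm_eq_abs, sq_abs]
        _ ≤ 1 := h1
    calc ∑ k, q k = ∑ j : Fin d, ∑ k, ⟪u k, (b j : E)⟫ ^ 2 := hsw
      _ ≤ ∑ _j : Fin d, (1:ℝ) := Finset.sum_le_sum fun j _ => hbes j
      _ = (d : ℝ) := by simp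
      _ ≤ (r : ℝ) := by exact_mod_cast hS
  -- step: each term bound
  have hterm : ∀ k, ς k ^ 2 * (1 - q k) ≤ ‖w k - ς k • u k‖ ^ 2 := by
    intro k
    set x := ς k • u k with hx
    have hmin : ‖x - P x‖ ≤ ‖w k - x‖ := by
      rw [norm_sub_rev (w k) x, show ‖x - (P x : E)‖ = ⨅ c : S, ‖x - (c : E)‖ from Submodule.starProjection_minimal x]
      have hbdd : BddBelow (Set.range fun c : S => ‖x - (c : E)‖) :=
        ⟨0, fun y hy => by obtain ⟨c, rfl⟩ := hy; exact norm_nonneg _⟩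
      exact ciInf_le hbdd ⟨w k, hw k⟩
    have hPx : x - (P x : E) = ς k • (u k - P (u k)) := by
      rw [hx, map_smul, Submodule.coe_smul, smul_sub]
    have hxP2 : ‖x - (P x : E)‖ ^ 2 = ς k ^ 2 * (1 - q k) := by
      rw [hPx, norm_smul, Real.norm_eq_abs, mul_pow, sq_abs]
      have := hpyth k
      nlinarith
    calc ς k ^ 2 * (1 - q k) = ‖x - (P x : E)‖ ^ 2 := hxP2.symm
      _ ≤ ‖w k - x‖ ^ 2 := by
          apply pow_le_pow_left₀ (norm_nonneg _) hmin
  have hweights := weights hrK ς q hς0 hanti hq0 hq1 hqs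
  calc ∑ i ∈ Finset.univ.filter (fun i : Fin K => r ≤ i.val), ς i ^ 2
      ≤ ∑ k, ς k ^ 2 * (1 - q k) := hweights
    _ ≤ ∑ k, ‖w k - ς k • u k‖ ^ 2 := Finset.sum_le_sum fun k _ => hterm k

open Matrix

lemma inner_eucl {m : ℕ} (x y : Fin m → ℝ) :
    ⟪(WithLp.equiv 2 (Fin m → ℝ)).symm x, (WithLp.equiv 2 (Fin m → ℝ)).symm y⟫ = x ⬝ᵥ y := by
  simp [PiLp.inner_apply, RCLike.inner_apply, dotProduct, mul_comm]

lemma norm_sq_eucl {m : ℕ} (x : EuclideanSpace ℝ (Fin m)) : ‖x‖ ^ 2 = ∑ i, x i ^ 2 := by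
  rw [← real_inner_self_eq_norm_sq]
  simp only [PiLp.inner_apply, RCLike.inner_apply, conj_trivial, sq]

lemma bessel_real {F : Type*} [NormedAddCommGroup F] [InnerProductSpace ℝ F]
    {ι : Type*} [Fintype ι] {f : ι → F} (hf : Orthonormal ℝ f) (x : F) :
    ∑ i, ⟪f i, x⟫ ^ 2 ≤ ‖x‖ ^ 2 := by
  have h := hf.sum_inner_products_le (s := Finset.univ) x
  simpa [Real.norm_eq_abs, sq_abs] using h

/-- Frobenius norm of a real matrix. -/
noncomputable def frobNorm {m n : ℕ} (A : Matrix (Fin m) (Fin n) ℝ) : ℝ :=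
  Real.sqrt (∑ i, ∑ j, (A i j) ^ 2)

theorem eckart_young_mirsky (m n : ℕ) (A : Matrix (Fin m) (Fin n) ℝ)
    (ς : Fin (min m n) → ℝ)
    (u : Fin (min m n) → Fin m → ℝ) (v : Fin (min m n) → Fin n → ℝ)
    (hu : ∀ k l, dotProduct (u k) (u l) = if k = l then (1 : ℝ) else 0)
    (hv : ∀ k l, dotProduct (v k) (v l) = if k = l then (1 : ℝ) else 0)
    (hς0 : ∀ k, 0 ≤ ς k) (hanti : Antitone ς)
    (hsvd : ∀ i j, A i j = ∑ k, ς k * u k i * v k j)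
    (r : ℕ) (B : Matrix (Fin m) (Fin n) ℝ)
    (hB : B.rank ≤ r) (hr : r < A.rank) :
    Real.sqrt (∑ i ∈ Finset.univ.filter (fun i : Fin (min m n) => r ≤ i.val), ς i ^ 2)
      ≤ frobNorm (B - A)
    ∧ 0 < Real.sqrt (∑ i ∈ Finset.univ.filter (fun i : Fin (min m n) => r ≤ i.val), ς i ^ 2) := by
  classical
  have hrK : r < min m n := lt_of_lt_of_le hr (le_min A.rank_le_height A.rank_le_width)
  set E := B - A with hE
  -- A *ᵥ v k = ς k • u k
  have hAv : ∀ k i, (A *ᵥ v k) i = ς k * u k i := by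
    intro k i
    show ∑ j, A i j * v k j = ς k * u k i
    calc ∑ j, A i j * v k j = ∑ j, ∑ l, ς l * u l i * v l j * v k j := by
          apply Finset.sum_congr rfl; intro j _
          rw [hsvd i j, Finset.sum_mul]
      _ = ∑ l, ∑ j, ς l * u l i * v l j * v k j := Finset.sum_comm
      _ = ∑ l, ς l * u l i * (v l ⬝ᵥ v k) := by
          apply Finset.sum_congr rfl; intro l _
          rw [dotProduct, Finset.mul_sum]
          apply Finset.sum_congr rfl; intro j _; ring
      _ = ς k * u k i := by
          simp only [hv, mul_ite, mul_one, mul_zero]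
          simp
  -- euclidean versions
  set em := (WithLp.equiv 2 (Fin m → ℝ)).symm with hem
  set en := (WithLp.equiv 2 (Fin n → ℝ)).symm with hen
  set uu : Fin (min m n) → EuclideanSpace ℝ (Fin m) := fun k => em (u k) with huu
  set vv : Fin (min m n) → EuclideanSpace ℝ (Fin n) := fun k => en (v k) with hvv
  have huO : Orthonormal ℝ uu := by
    rw [orthonormal_iff_ite]
    intro k l
    rw [huu]; rw [inner_eucl]; exact hu k l
  have hvO : Orthonormal ℝ vv := by
    rw [orthonormal_iff_ite]
    intro k l
    rw [hvv]; rw [inner_eucl]; exact hv k l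
  -- the subspace
  set e := WithLp.linearEquiv 2 ℝ (Fin m → ℝ) with he
  set S : Submodule ℝ (EuclideanSpace ℝ (Fin m)) :=
    Submodule.map (e.symm : (Fin m → ℝ) →ₗ[ℝ] EuclideanSpace ℝ (Fin m)) (LinearMap.range B.mulVecLin) with hS
  have hSrank : Module.finrank ℝ S ≤ r :=
    le_trans (le_of_eq (LinearEquiv.finrank_map_eq e.symm (LinearMap.range B.mulVecLin))) hB
  set w : Fin (min m n) → EuclideanSpace ℝ (Fin m) := fun k => em (B *ᵥ v k) with hw
  have hwS : ∀ k, w k ∈ S := by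
    intro k
    exact ⟨B *ᵥ v k, ⟨v k, rfl⟩, rfl⟩
  -- key lemma
  have hkey := key_lemma hrK S hSrank uu huO ς hς0 hanti w hwS
  -- rewrite the residual
  have hres : ∀ k, w k - ς k • uu k = em (E *ᵥ v k) := by
    intro k
    ext i
    show (B *ᵥ v k) i - ς k * u k i = (E *ᵥ v k) i
    rw [hE, Matrix.sub_mulVec]
    show (B *ᵥ v k) i - ς k * u k i = (B *ᵥ v k) i - (A *ᵥ v k) i
    rw [hAv k i]
  -- Bessel bound on rows
  have hrows : ∑ k, ‖em (E *ᵥ v k)‖ ^ 2 ≤ ∑ i, ∑ j, (E i j) ^ 2 := by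
    have h1 : ∀ k, ‖em (E *ᵥ v k)‖ ^ 2 = ∑ i, ((E *ᵥ v k) i) ^ 2 := by
      intro k; exact norm_sq_eucl _
    calc ∑ k, ‖em (E *ᵥ v k)‖ ^ 2 = ∑ k, ∑ i, ((E *ᵥ v k) i) ^ 2 :=
          Finset.sum_congr rfl fun k _ => h1 k
      _ = ∑ i, ∑ k, ((E *ᵥ v k) i) ^ 2 := Finset.sum_comm
      _ ≤ ∑ i, ∑ j, (E i j) ^ 2 := by
          apply Finset.sum_le_sum
          intro i _
          have hb := bessel_real hvO (en (E i))
          have h2 : ∀ k, ⟪vv k, en (E i)⟫ = (E *ᵥ v k) i := by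
            intro k
            rw [hvv, inner_eucl, dotProduct]
            show ∑ j, v k j * E i j = ∑ j, E i j * v k j
            apply Finset.sum_congr rfl; intro j _; ring
          have h3 : ‖en (E i)‖ ^ 2 = ∑ j, (E i j) ^ 2 := norm_sq_eucl _
          calc ∑ k, ((E *ᵥ v k) i) ^ 2 = ∑ k, ⟪vv k, en (E i)⟫ ^ 2 := by
                apply Finset.sum_congr rfl; intro k _; rw [h2 k]
            _ ≤ ‖en (E i)‖ ^ 2 := hb
            _ = ∑ j, (E i j) ^ 2 := h3
  have hmain : ∑ i ∈ Finset.univ.filter (fun i : Fin (min m n) => r ≤ i.val), ς i ^ 2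
      ≤ ∑ i, ∑ j, (E i j) ^ 2 := by
    calc ∑ i ∈ Finset.univ.filter (fun i : Fin (min m n) => r ≤ i.val), ς i ^ 2
        ≤ ∑ k, ‖w k - ς k • uu k‖ ^ 2 := hkey
      _ = ∑ k, ‖em (E *ᵥ v k)‖ ^ 2 := Finset.sum_congr rfl fun k _ => by rw [hres k]
      _ ≤ ∑ i, ∑ j, (E i j) ^ 2 := hrows
  -- positivity
  set ρ : Fin (min m n) := ⟨r, hrK⟩ with hρ
  have hςρ : 0 < ς ρ := by
    rcases lt_or_eq_of_le (hς0 ρ) with h | h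
    · exact h
    have hρ0 : ς ρ = 0 := h.symm
    exfalso
    have hz : ∀ k : Fin (min m n), r ≤ k.val → ς k = 0 := by
      intro k hk
      have h1 : ρ ≤ k := by rw [Fin.le_def]; exact hk
      have h2 := hanti h1
      rw [hρ0] at h2
      exact le_antisymm h2 (hς0 k)
    -- then rank A ≤ r
    set L := Finset.univ.filter (fun k : Fin (min m n) => k.val < r) with hL
    set t : Finset (Fin m → ℝ) := L.image u with ht
    have hrange : LinearMap.range A.mulVecLin ≤ Submodule.span ℝ (t : Set (Fin m → ℝ)) := by
      rintro _ ⟨x, rfl⟩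
      have hAx : A.mulVecLin x = ∑ k ∈ L, (ς k * (v k ⬝ᵥ x)) • u k := by
        funext i
        show ∑ j, A i j * x j = _
        have hfull : ∑ j, A i j * x j = ∑ k, (ς k * (v k ⬝ᵥ x)) * u k i := by
          calc ∑ j, A i j * x j = ∑ j, ∑ k, ς k * u k i * v k j * x j := by
                apply Finset.sum_congr rfl; intro j _
                rw [hsvd i j, Finset.sum_mul]
            _ = ∑ k, ∑ j, ς k * u k i * v k j * x j := Finset.sum_comm
            _ = ∑ k, (ς k * (v k ⬝ᵥ x)) * u k i := by
                apply Finset.sum_congr rfl; intro k _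
                rw [dotProduct, Finset.mul_sum, Finset.sum_mul]
                apply Finset.sum_congr rfl; intro j _; ring
        rw [hfull]
        rw [show ((∑ k ∈ L, (ς k * (v k ⬝ᵥ x)) • u k) i) = ∑ k ∈ L, (ς k * (v k ⬝ᵥ x)) * u k i
          from by rw [Finset.sum_apply]; rfl]
        symm
        apply Finset.sum_subset (Finset.subset_univ L)
        intro k _ hk
        have : ς k = 0 := hz k (by simp [hL] at hk; omega)
        rw [this]; ring
      rw [hAx]
      apply Submodule.sum_mem
      intro k hk
      exact Submodule.smul_mem _ _ (Submodule.subset_span (Finset.mem_coe.mpr (Finset.mem_image_of_mem u hk)))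
    have h4 : A.rank ≤ r := by
      have h5 : A.rank ≤ Module.finrank ℝ (Submodule.span ℝ (t : Set (Fin m → ℝ))) :=
        Submodule.finrank_mono hrange
      have h6 := finrank_span_finset_le_card (R := ℝ) t
      have h7 : t.card ≤ L.card := Finset.card_image_le
      have h8 : L.card = r := card_filter_lt (min m n) r hrK.le
      calc A.rank ≤ Module.finrank ℝ (Submodule.span ℝ (t : Set (Fin m → ℝ))) := h5
        _ ≤ t.card := h6
        _ ≤ r := by omega
    omega
  have hTpos : 0 < ∑ i ∈ Finset.univ.filter (fun i : Fin (min m n) => r ≤ i.val), ς i ^ 2 := by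
    have hmem : ρ ∈ Finset.univ.filter (fun i : Fin (min m n) => r ≤ i.val) := by
      simp [hρ]
    have := Finset.single_le_sum (f := fun i => ς i ^ 2)
      (fun i _ => sq_nonneg (ς i)) hmem
    have h9 : 0 < ς ρ ^ 2 := pow_pos hςρ 2
    have h10 : ς ρ ^ 2 ≤ ∑ i ∈ Finset.univ.filter (fun i : Fin (min m n) => r ≤ i.val), ς i ^ 2 := this
    linarith
  constructor
  · rw [frobNorm]
    apply Real.sqrt_le_sqrt
    exact hmain
  · exact Real.sqrt_pos.mpr hTpos
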